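/- (G₁ is strictly decreasing at the second zero of g₂.) Let γ ∈ ℝ, b > 0, ρ ∈ (−1,1), μ ∈ ℝ with γ + √(1−ρ²) > 0, and set l* = −ρ/√(1−ρ²). Suppose l₂ > l* satisfies g₂(l₂) = 0 (so that N''(l₂) = N'(l₂)²/(2·N(l₂)) and N'(l₂) > 0) and suppose μ < 2·N(l₂)/N'(l₂) − b·N(l₂)/2 − l₂. Then the derivative of G₁ at l₂ is strictly negative: G₁'(l₂) < 0. -/

import Mathlib

/-- SVI normalized total variance shape: `N(l) = γ + ρ·l + √(l²+1)`. -/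
noncomputable def Nf (γ ρ l : ℝ) : ℝ := γ + ρ * l + Real.sqrt (l ^ 2 + 1)

/-- `N'(l) = ρ + l/√(l²+1)`. -/
noncomputable def Nf' (ρ l : ℝ) : ℝ := ρ + l / Real.sqrt (l ^ 2 + 1)

/-- `N''(l) = (l²+1)^(−3/2)`. -/
noncomputable def Nf'' (l : ℝ) : ℝ := (l ^ 2 + 1) ^ (-(3 : ℝ) / 2)

/-- `h(l) = 1 − N'(l)·(l+μ)/(2N(l))`. -/
noncomputable def hf (γ ρ μ l : ℝ) : ℝ := 1 - Nf' ρ l * (l + μ) / (2 * Nf γ ρ l)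

/-- `g(l) = N'(l)/4`. -/
noncomputable def gf (ρ l : ℝ) : ℝ := Nf' ρ l / 4

/-- `g₂(l) = N''(l) − N'(l)²/(2N(l))`. -/
noncomputable def g2 (γ ρ l : ℝ) : ℝ := Nf'' l - (Nf' ρ l) ^ 2 / (2 * Nf γ ρ l)

/-- `G₁(l) = (h(l) − b·g(l))·(h(l) + b·g(l))`. -/
noncomputable def G1 (γ b ρ μ l : ℝ) : ℝ :=
  (hf γ ρ μ l - b * gf ρ l) * (hf γ ρ μ l + b * gf ρ l)

/-- Fukasawa (weak no-arbitrage) conditions: both factors of `G₁` are positive on `ℝ`. -/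
def FukasawaCond (γ b ρ μ : ℝ) : Prop :=
  ∀ l : ℝ, 0 < hf γ ρ μ l - b * gf ρ l ∧ 0 < hf γ ρ μ l + b * gf ρ l

/-- No Butterfly arbitrage (Martini–Mingone characterization): Fukasawa conditions plus
`G₁ + (b/(2σ))·g₂ ≥ 0` on `ℝ`. -/
def ArbitrageFree (γ b ρ μ σ : ℝ) : Prop :=
  FukasawaCond γ b ρ μ ∧ ∀ l : ℝ, 0 ≤ G1 γ b ρ μ l + b / (2 * σ) * g2 γ ρ l

set_option maxHeartbeats 1000000 in
lemma G1_aux_algebra (A P Q H b l₂ μ : ℝ) (hA : 0 < A) (hP : 0 < P) (hb : 0 < b)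
    (hQ : Q = P ^ 2 / (2 * A)) (hH : H = 1 - P * (l₂ + μ) / (2 * A)) :
    (-(((Q * (l₂ + μ) + P * 1) * (2 * A) - P * (l₂ + μ) * (2 * P)) / (2 * A) ^ 2)
        - b * (Q / 4)) * (H + b * (P / 4))
      + (H - b * (P / 4))
        * (-(((Q * (l₂ + μ) + P * 1) * (2 * A) - P * (l₂ + μ) * (2 * P)) / (2 * A) ^ 2)
        + b * (Q / 4)) < 0 := by
  subst hQ hH
  have hAne : A ≠ 0 := ne_of_gt hA
  have heq : (-(((P ^ 2 / (2 * A) * (l₂ + μ) + P * 1) * (2 * A) - P * (l₂ + μ) * (2 * P)) / (2 * A) ^ 2)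
        - b * (P ^ 2 / (2 * A) / 4)) * ((1 - P * (l₂ + μ) / (2 * A)) + b * (P / 4))
      + ((1 - P * (l₂ + μ) / (2 * A)) - b * (P / 4))
        * (-(((P ^ 2 / (2 * A) * (l₂ + μ) + P * 1) * (2 * A) - P * (l₂ + μ) * (2 * P)) / (2 * A) ^ 2)
        + b * (P ^ 2 / (2 * A) / 4))
      = -(P / (16 * A ^ 3)) * (4 * (2 * A - P * (l₂ + μ)) ^ 2 + b ^ 2 * P ^ 2 * A ^ 2) := by
    field_simp
    ring
  rw [heq]
  have hpos : 0 < P / (16 * A ^ 3) * (4 * (2 * A - P * (l₂ + μ)) ^ 2 + b ^ 2 * P ^ 2 * A ^ 2) := by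
    apply mul_pos (div_pos hP (by positivity))
    have h1 : 0 < b ^ 2 * P ^ 2 * A ^ 2 := by positivity
    nlinarith [sq_nonneg (2 * A - P * (l₂ + μ))]
  linarith

/-- G₁ is strictly decreasing at the second zero of g₂. -/
theorem G1_decreasing_at_second_zero (γ b ρ μ l₂ : ℝ) (hb : 0 < b)
    (hρ : ρ ∈ Set.Ioo (-1 : ℝ) 1) (hγ : 0 < γ + Real.sqrt (1 - ρ ^ 2))
    (hl₂ : -ρ / Real.sqrt (1 - ρ ^ 2) < l₂)
    (hzero : g2 γ ρ l₂ = 0)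
    (hμ : μ < 2 * Nf γ ρ l₂ / Nf' ρ l₂ - b * Nf γ ρ l₂ / 2 - l₂) :
    deriv (G1 γ b ρ μ) l₂ < 0 := by
  obtain ⟨hρ1, hρ2⟩ := hρ
  set s := Real.sqrt (1 - ρ ^ 2) with hs_def
  have hs2 : s ^ 2 = 1 - ρ ^ 2 := Real.sq_sqrt (by nlinarith)
  have hs0 : 0 < s := Real.sqrt_pos.mpr (by nlinarith)
  set t := Real.sqrt (l₂ ^ 2 + 1) with ht_def
  have ht2 : t ^ 2 = l₂ ^ 2 + 1 := Real.sq_sqrt (by positivity)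
  have ht0 : 0 < t := Real.sqrt_pos.mpr (by positivity)
  have htne : t ≠ 0 := ne_of_gt ht0
  have hcrit : -ρ < l₂ * s := by rwa [div_lt_iff₀ hs0] at hl₂
  -- N positive
  have hN : 0 < Nf γ ρ l₂ := by
    unfold Nf
    rw [← ht_def]
    nlinarith [sq_nonneg (l₂ * s + ρ), mul_pos ht0 hs0, sq_nonneg (t - s + ρ * l₂)]
  have hNne : Nf γ ρ l₂ ≠ 0 := ne_of_gt hN
  -- N' positive
  have key : 0 < ρ * t + l₂ := by
    have e1 : l₂ ^ 2 * s ^ 2 = l₂ ^ 2 * (1 - ρ ^ 2) := by rw [hs2]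
    have e2 : ρ ^ 2 * t ^ 2 = ρ ^ 2 * (l₂ ^ 2 + 1) := by rw [ht2]
    rcases le_or_gt 0 l₂ with h0 | h0
    · by_contra hk
      push_neg at hk
      have hρneg : ρ ≤ 0 := by nlinarith
      have f1 : 0 < l₂ * s - ρ := by linarith
      nlinarith [mul_pos (show (0:ℝ) < l₂ * s + ρ by linarith) f1,
        mul_nonneg (show (0:ℝ) ≤ -(ρ * t) - l₂ by linarith)
          (show (0:ℝ) ≤ l₂ - ρ * t by linarith), e1, e2]
    · by_contra hk
      push_neg at hk
      have hls : l₂ * s < 0 := mul_neg_of_neg_of_pos h0 hs0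
      have hρpos : 0 < ρ := by linarith
      nlinarith [mul_pos (show (0:ℝ) < l₂ * s + ρ by linarith)
          (show (0:ℝ) < ρ - l₂ * s by linarith),
        mul_nonneg (show (0:ℝ) ≤ -l₂ - ρ * t by linarith)
          (show (0:ℝ) ≤ -l₂ + ρ * t by nlinarith [mul_pos hρpos ht0]), e1, e2]
  have hP : 0 < Nf' ρ l₂ := by
    unfold Nf'
    rw [← ht_def]
    have : ρ + l₂ / t = (ρ * t + l₂) / t := by field_simp
    rw [this]
    exact div_pos key ht0
  -- N'' value
  have hQ3 : Nf'' l₂ = 1 / t ^ 3 := by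
    unfold Nf''
    rw [show (-(3:ℝ) / 2) = -(3 / 2) by ring, Real.rpow_neg (by positivity), ht_def,
      Real.sqrt_eq_rpow, ← Real.rpow_natCast ((l₂ ^ 2 + 1) ^ ((1:ℝ)/2)) 3,
      ← Real.rpow_mul (by positivity)]
    norm_num
  -- derivative of sqrt(l^2+1)
  have hS : HasDerivAt (fun l : ℝ => Real.sqrt (l ^ 2 + 1)) (l₂ / t) l₂ := by
    have hinner : HasDerivAt (fun l : ℝ => l ^ 2 + 1) (2 * l₂) l₂ := by
      simpa using (hasDerivAt_pow 2 l₂).add_const 1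
    have := (Real.hasDerivAt_sqrt (show l₂ ^ 2 + 1 ≠ 0 by positivity)).comp l₂ hinner
    refine this.congr_deriv ?_
    rw [← ht_def]
    field_simp
  -- derivative of Nf
  have hNd : HasDerivAt (Nf γ ρ) (Nf' ρ l₂) l₂ := by
    have : HasDerivAt (fun l : ℝ => γ + ρ * l + Real.sqrt (l ^ 2 + 1)) (ρ * 1 + l₂ / t) l₂ :=
      (((hasDerivAt_id l₂).const_mul ρ).const_add γ).add hS
    refine this.congr_deriv ?_
    unfold Nf'
    rw [← ht_def]
    ring
  -- derivative of Nf'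
  have hPd : HasDerivAt (Nf' ρ) (Nf'' l₂) l₂ := by
    have hbase : HasDerivAt (fun l : ℝ => l / Real.sqrt (l ^ 2 + 1))
        ((1 * t - l₂ * (l₂ / t)) / t ^ 2) l₂ := by
      have := (hasDerivAt_id l₂).div hS (by rw [← ht_def]; exact htne)
      refine this.congr_deriv ?_; rw [← ht_def]; rfl
    have h2 : HasDerivAt (fun l : ℝ => ρ + l / Real.sqrt (l ^ 2 + 1))
        ((1 * t - l₂ * (l₂ / t)) / t ^ 2) l₂ := hbase.const_add ρ
    refine h2.congr_deriv ?_
    rw [hQ3]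
    field_simp
    linear_combination ht2
  -- derivative of hf
  have hu : HasDerivAt (fun l => Nf' ρ l * (l + μ))
      (Nf'' l₂ * (l₂ + μ) + Nf' ρ l₂ * 1) l₂ :=
    hPd.mul ((hasDerivAt_id l₂).add_const μ)
  have hv : HasDerivAt (fun l => 2 * Nf γ ρ l) (2 * Nf' ρ l₂) l₂ := hNd.const_mul 2
  have hvne : 2 * Nf γ ρ l₂ ≠ 0 := by positivity
  have hHd : HasDerivAt (hf γ ρ μ)
      (-(((Nf'' l₂ * (l₂ + μ) + Nf' ρ l₂ * 1) * (2 * Nf γ ρ l₂)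
          - Nf' ρ l₂ * (l₂ + μ) * (2 * Nf' ρ l₂)) / (2 * Nf γ ρ l₂) ^ 2)) l₂ :=
    (hu.div hv hvne).const_sub 1
  have hgd : HasDerivAt (gf ρ) (Nf'' l₂ / 4) l₂ := hPd.div_const 4
  have hG : HasDerivAt (G1 γ b ρ μ)
      ((-(((Nf'' l₂ * (l₂ + μ) + Nf' ρ l₂ * 1) * (2 * Nf γ ρ l₂)
          - Nf' ρ l₂ * (l₂ + μ) * (2 * Nf' ρ l₂)) / (2 * Nf γ ρ l₂) ^ 2) - b * (Nf'' l₂ / 4))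
        * (hf γ ρ μ l₂ + b * gf ρ l₂)
      + (hf γ ρ μ l₂ - b * gf ρ l₂)
        * (-(((Nf'' l₂ * (l₂ + μ) + Nf' ρ l₂ * 1) * (2 * Nf γ ρ l₂)
          - Nf' ρ l₂ * (l₂ + μ) * (2 * Nf' ρ l₂)) / (2 * Nf γ ρ l₂) ^ 2) + b * (Nf'' l₂ / 4))) l₂ :=
    (hHd.sub (hgd.const_mul b)).mul (hHd.add (hgd.const_mul b))
  rw [hG.deriv]
  have hQ2 : Nf'' l₂ = (Nf' ρ l₂) ^ 2 / (2 * Nf γ ρ l₂) := by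
    have h0 : Nf'' l₂ - (Nf' ρ l₂) ^ 2 / (2 * Nf γ ρ l₂) = 0 := hzero
    linarith
  have hHval : hf γ ρ μ l₂ = 1 - Nf' ρ l₂ * (l₂ + μ) / (2 * Nf γ ρ l₂) := rfl
  have hgval : gf ρ l₂ = Nf' ρ l₂ / 4 := rfl
  rw [hgval]
  exact G1_aux_algebra (Nf γ ρ l₂) (Nf' ρ l₂) (Nf'' l₂) (hf γ ρ μ l₂) b l₂ μ hN hP hb hQ2 hHval
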